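/- Let L > 0 and δ > 0. Then for every x ∈ ℝ with |x| < L/2, one has 0 ≤ 1/2 − A_δ[1](x) ≤ (2δ/π) · ( 1/(L/2 − x) + 1/(L/2 + x) ), where A_δ[1](x) = (1/π) ∫_{−L/2}^{L/2} δ/((x−y)² + 4δ²) dy. -/

import Mathlib

open MeasureTheory Real

lemma arctan_le_self_aux {t : ℝ} (ht : 0 ≤ t) : Real.arctan t ≤ t := by
  have h1 : 0 ≤ Real.arctan t := by
    rw [← Real.arctan_zero]; exact Real.arctan_strictMono.monotone ht
  have := Real.le_tan h1 (Real.arctan_lt_pi_div_two t)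
  rwa [Real.tan_arctan] at this

/-- For `L > 0`, `δ > 0` and `|x| < L/2`, one has
`0 ≤ 1/2 − A_δ[1](x) ≤ (2δ/π)·(1/(L/2 − x) + 1/(L/2 + x))`, where
`A_δ[1](x) = (1/π) ∫_{−L/2}^{L/2} δ/((x − y)^2 + 4*δ^2) dy`. -/
theorem adelta_one_tail_bound (L δ : ℝ) (hL : 0 < L) (hδ : 0 < δ) (x : ℝ)
    (hx : |x| < L/2) :
    0 ≤ 1/2 - (1/Real.pi) * (∫ y in (-(L/2))..(L/2), δ/((x - y)^2 + 4*δ^2)) ∧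
    1/2 - (1/Real.pi) * (∫ y in (-(L/2))..(L/2), δ/((x - y)^2 + 4*δ^2))
      ≤ (2*δ/Real.pi) * (1/(L/2 - x) + 1/(L/2 + x)) := by
  obtain ⟨hx1, hx2⟩ := abs_lt.mp hx
  have ha : 0 < L/2 - x := by linarith
  have hb : 0 < L/2 + x := by linarith
  have hπ : 0 < Real.pi := Real.pi_pos
  set a : ℝ := (L/2 - x)/(2*δ) with ha_def
  set b : ℝ := (L/2 + x)/(2*δ) with hb_def
  have hap : 0 < a := by positivity
  have hbp : 0 < b := by positivity
  -- derivative
  have key : ∀ y : ℝ, HasDerivAt (fun y => (1/2) * Real.arctan ((y - x)/(2*δ)))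
      (δ/((x - y)^2 + 4*δ^2)) y := by
    intro y
    have h1 : HasDerivAt (fun y : ℝ => (y - x)/(2*δ)) (1/(2*δ)) y := by
      simpa using ((hasDerivAt_id y).sub_const x).div_const (2*δ)
    have h2 := ((Real.hasDerivAt_arctan ((y - x)/(2*δ))).comp y h1).const_mul (1/2)
    refine h2.congr_deriv ?_
    have hd : (x - y)^2 + 4*δ^2 ≠ 0 := by positivity
    field_simp
    ring
  have hcont : Continuous fun y : ℝ => δ/((x - y)^2 + 4*δ^2) := by
    apply Continuous.div continuous_const (by continuity)
    intro y; positivity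
  have hint : (∫ y in (-(L/2))..(L/2), δ/((x - y)^2 + 4*δ^2))
      = (1/2) * (Real.arctan a + Real.arctan b) := by
    rw [intervalIntegral.integral_eq_sub_of_hasDerivAt (fun y _ => key y)
      (hcont.intervalIntegrable _ _)]
    have h1 : (L/2 - x)/(2*δ) = a := rfl
    have h2 : (-(L/2) - x)/(2*δ) = -b := by rw [hb_def]; ring
    rw [h1, h2, Real.arctan_neg]
    ring
  rw [hint]
  have h2a := Real.arctan_lt_pi_div_two a
  have h2b := Real.arctan_lt_pi_div_two b
  constructor
  · rw [sub_nonneg, one_div, inv_mul_le_iff₀ hπ]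
    nlinarith
  · -- π/2 - arctan a ≤ 1/a
    have hta : Real.pi/2 - Real.arctan a ≤ 1/a := by
      have := Real.arctan_inv_of_pos hap
      have h := arctan_le_self_aux (le_of_lt (inv_pos.mpr hap))
      rw [this] at h
      rw [← one_div] at h
      linarith
    have htb : Real.pi/2 - Real.arctan b ≤ 1/b := by
      have := Real.arctan_inv_of_pos hbp
      have h := arctan_le_self_aux (le_of_lt (inv_pos.mpr hbp))
      rw [this] at h
      rw [← one_div] at h
      linarith
    have hia : 1/a = 2*δ/(L/2 - x) := by rw [ha_def]; field_simp
    have hib : 1/b = 2*δ/(L/2 + x) := by rw [hb_def]; field_simp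
    rw [hia] at hta; rw [hib] at htb
    have key2 : 1/2 - (1/Real.pi) * ((1/2) * (Real.arctan a + Real.arctan b))
        = (1/(2*Real.pi)) * ((Real.pi/2 - Real.arctan a) + (Real.pi/2 - Real.arctan b)) := by
      field_simp; ring
    rw [key2]
    have hsum : (Real.pi/2 - Real.arctan a) + (Real.pi/2 - Real.arctan b)
        ≤ 2*δ/(L/2 - x) + 2*δ/(L/2 + x) := by linarith
    have h3 : (1/(2*Real.pi)) * (2*δ/(L/2 - x) + 2*δ/(L/2 + x))
        = (δ/Real.pi) * (1/(L/2 - x) + 1/(L/2 + x)) := by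
      field_simp
    have h4 : (δ/Real.pi) * (1/(L/2 - x) + 1/(L/2 + x))
        ≤ (2*δ/Real.pi) * (1/(L/2 - x) + 1/(L/2 + x)) := by
      have hS : 0 ≤ 1/(L/2 - x) + 1/(L/2 + x) := by positivity
      exact mul_le_mul_of_nonneg_right ((div_le_div_iff_of_pos_right hπ).mpr (by linarith)) hS
    calc (1/(2*Real.pi)) * ((Real.pi/2 - Real.arctan a) + (Real.pi/2 - Real.arctan b))
        ≤ (1/(2*Real.pi)) * (2*δ/(L/2 - x) + 2*δ/(L/2 + x)) := by
          apply mul_le_mul_of_nonneg_left hsum; positivity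
      _ = (δ/Real.pi) * (1/(L/2 - x) + 1/(L/2 + x)) := h3
      _ ≤ (2*δ/Real.pi) * (1/(L/2 - x) + 1/(L/2 + x)) := h4
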